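/- For every natural number i > 0, f(1 / (3^i - 1)) = 2^i / (3^i + 2^(i-1)). -/
import Mathlib


open intervalIntegral Set

theorem bourbaki_stmt (f : ℝ → ℝ)
    (hcont : ContinuousOn f (Set.Icc 0 1))
    (h0 : f 0 = 0) (h1 : f 1 = 1)
    (hw1 : ∀ x ∈ Set.Icc (0:ℝ) 1, f (x / 3) = (2/3) * f x)
    (hw2 : ∀ x ∈ Set.Icc (0:ℝ) 1, f ((2 - x) / 3) = (1/3) * (1 + f x))
    (hw3 : ∀ x ∈ Set.Icc (0:ℝ) 1, f ((2 + x) / 3) = 1/3 + (2/3) * f x) :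
    ∀ i : ℕ, 0 < i → f (1 / (3 ^ i - 1)) = 2 ^ i / (3 ^ i + 2 ^ (i - 1)) := by
  have L1 : ∀ k : ℕ, ∀ x ∈ Set.Icc (0:ℝ) 1, f (x / 3 ^ k) = (2/3)^k * f x := by
    intro k
    induction k with
    | zero => intro x hx; simp
    | succ k ih =>
      intro x hx
      have hp : (1:ℝ) ≤ 3 ^ k := one_le_pow₀ (by norm_num)
      have hx3 : x / 3 ^ k ∈ Set.Icc (0:ℝ) 1 := by
        constructor
        · exact div_nonneg hx.1 (by positivity)
        · exact div_le_one_of_le₀ (le_trans hx.2 hp) (by positivity)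
      have harg : x / 3 ^ (k+1) = (x / 3 ^ k) / 3 := by
        rw [div_div]; ring_nf
      rw [harg, hw1 _ hx3, ih x hx, pow_succ]; ring
  have L2 : ∀ k : ℕ, ∀ x ∈ Set.Icc (0:ℝ) 1,
      f ((x + 3 ^ k - 1) / 3 ^ k) = 1 - (2/3)^k * (1 - f x) := by
    intro k
    induction k with
    | zero => intro x hx; simp
    | succ k ih =>
      intro x hx
      have hp : (1:ℝ) ≤ 3 ^ k := one_le_pow₀ (by norm_num)
      have hy : (x + 3 ^ k - 1) / 3 ^ k ∈ Set.Icc (0:ℝ) 1 := by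
        constructor
        · apply div_nonneg _ (by positivity)
          nlinarith [hx.1]
        · apply div_le_one_of_le₀ _ (by positivity)
          nlinarith [hx.2]
      have harg : (x + 3 ^ (k+1) - 1) / 3 ^ (k+1)
          = (2 + (x + 3 ^ k - 1) / 3 ^ k) / 3 := by
        have h3 : (3:ℝ) ^ k ≠ 0 := by positivity
        field_simp
        ring
      rw [harg, hw3 _ hy, ih x hx]; ring
  intro i hi
  obtain ⟨k, rfl⟩ : ∃ k, i = k + 1 := ⟨i - 1, (Nat.succ_pred_eq_of_pos hi).symm⟩
  set P : ℝ := 3 ^ (k+1) with hP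
  have hP3 : (3:ℝ) ≤ P := by
    rw [hP]; calc (3:ℝ) = 3 ^ 1 := by norm_num
    _ ≤ 3 ^ (k+1) := pow_le_pow_right₀ (by norm_num) (by omega)
  have hPne : P - 1 ≠ 0 := by nlinarith
  set a : ℝ := 1 / (P - 1) with ha
  have ha01 : a ∈ Set.Icc (0:ℝ) 1 := by
    constructor
    · apply div_nonneg (by norm_num); nlinarith
    · apply div_le_one_of_le₀ (by nlinarith) (by nlinarith)
  set b : ℝ := 1 - a with hb
  have hb01 : b ∈ Set.Icc (0:ℝ) 1 := by
    constructor <;> [nlinarith [ha01.2]; nlinarith [ha01.1]]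
  have h2b : (2 - b)/3 ∈ Set.Icc (0:ℝ) 1 := by
    constructor <;> [nlinarith [hb01.2]; nlinarith [hb01.1]]
  have h2a : (2 - a)/3 ∈ Set.Icc (0:ℝ) 1 := by
    constructor <;> [nlinarith [ha01.2]; nlinarith [ha01.1]]
  have h3k : (3:ℝ) ^ k ≠ 0 := by positivity
  have hPk : P = 3 * 3 ^ k := by rw [hP, pow_succ]; ring
  -- a = ((2-b)/3) / 3^k
  have key1 : a = ((2 - b)/3) / 3 ^ k := by
    rw [hb, ha]
    field_simp
    nlinarith [hPk]
  -- b = ((2-a)/3 + 3^k - 1) / 3^k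
  have key2 : b = ((2 - a)/3 + 3 ^ k - 1) / 3 ^ k := by
    rw [hb, ha]
    field_simp
    nlinarith [hPk]
  have eq1 : f a = (2/3)^k * ((1/3) * (1 + f b)) := by
    rw [key1, L1 k _ h2b, hw2 b hb01]
  have eq2 : f b = 1 - (2/3)^k * (1 - (1/3) * (1 + f a)) := by
    rw [key2, L2 k _ h2a, hw2 a ha01]
  -- solve the linear system
  set r : ℝ := (2/3)^k with hr
  have hr0 : 0 < r := by positivity
  have hr1 : r ≤ 1 := pow_le_one₀ (by norm_num) (by norm_num)
  have hsolve : f a * (3 + r) = 2 * r := by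
    have h9 : f a * (9 - r^2) = 2 * r * (3 - r) := by nlinarith [eq1, eq2]
    have h3r : (3:ℝ) - r > 0 := by linarith
    have : (f a * (3 + r)) * (3 - r) = (2 * r) * (3 - r) := by nlinarith
    exact mul_right_cancel₀ (ne_of_gt h3r) this
  -- convert to stated form
  have hrval : r = 2 ^ k / 3 ^ k := by rw [hr, div_pow]
  have hden : (0:ℝ) < 3 ^ (k+1) + 2 ^ k := by positivity
  have hfa : f a = 2 * r / (3 + r) := by
    field_simp at hsolve ⊢
    linarith [hsolve]
  show f (1 / (3 ^ (k+1) - 1)) = 2 ^ (k+1) / (3 ^ (k+1) + 2 ^ (k+1-1))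
  have : (1:ℝ) / (3 ^ (k+1) - 1) = a := by rw [ha, hP]
  rw [this, hfa, hrval]
  have h1 : k + 1 - 1 = k := by omega
  rw [h1]
  have hne : (3:ℝ) + 2 ^ k / 3 ^ k ≠ 0 := by positivity
  rw [div_eq_div_iff hne (ne_of_gt hden)]
  field_simp
  ring
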